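/- In a chart with a LLEE-witness, if u and v lie in the same strongly connected component and u ↓* v (u reaches v by finitely many descends-in-loop-to steps), then v (→loops-back-to)* u, i.e., v loops back to u in finitely many steps. -/

import Mathlib

/-- An entry/body-labeled finite chart: a rooted labelled transition system with
termination sink `tick` (√), start vertex `start`, and transitions carrying an
action from `A` together with a marking label in ℕ (label `0` marks body
transitions, positive labels mark entry transitions).  Every vertex other than
possibly `tick` is reachable from the start vertex. -/
structure LChart (V : Type) (A : Type) : Type where
  tick : V
  start : V
  Tr : V → A → ℕ → V → Prop
  tick_no_out : ∀ (a : A) (n : ℕ) (w : V), ¬ Tr tick a n w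
  start_ne_tick : start ≠ tick
  connected : ∀ v : V, v = tick ∨
    Relation.ReflTransGen (fun x y => ∃ (a : A) (n : ℕ), Tr x a n y) start v

namespace LChart

variable {V A : Type}

/-- Body transition step (marking label `0`). -/
def BStep (C : LChart V A) (x y : V) : Prop := ∃ a : A, C.Tr x a 0 y

/-- Entry transition step of level `α > 0`. -/
def EStep (C : LChart V A) (α : ℕ) (x y : V) : Prop := 0 < α ∧ ∃ a : A, C.Tr x a α y

/-- A transition step of any kind. -/
def AnyStep (C : LChart V A) (x y : V) : Prop := ∃ (a : A) (n : ℕ), C.Tr x a n y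

/-- There is an entry transition of level `α` departing from `v`. -/
def HasEntry (C : LChart V A) (v : V) (α : ℕ) : Prop :=
  0 < α ∧ ∃ (a : A) (w : V), C.Tr v a α w

/-- `v` descends in a loop of level `α` to `w`: there is a path from `v` to `w`
starting with an `α`-entry transition and continuing with body transitions, in
which all transition targets avoid `v`. -/
def Descends (C : LChart V A) (v : V) (α : ℕ) (w : V) : Prop :=
  ∃ u : V, C.EStep α v u ∧ u ≠ v ∧
    Relation.ReflTransGen (fun x y => C.BStep x y ∧ y ≠ v) u w

/-- `v` descends in a loop to `w` (at some level). -/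
def Desc (C : LChart V A) (v w : V) : Prop := ∃ α : ℕ, C.Descends v α w

/-- An infinite path from `v` in the loop subchart `C[v,α]`: it starts at `v`,
takes an `α`-entry transition whenever it is at `v`, and body transitions
otherwise. -/
def LoopSeq (C : LChart V A) (v : V) (α : ℕ) (f : ℕ → V) : Prop :=
  f 0 = v ∧ ∀ n : ℕ,
    (f n = v → C.EStep α (f n) (f (n + 1))) ∧ (f n ≠ v → C.BStep (f n) (f (n + 1)))

/-- The conditions (W1), (W2)(a) (the subchart `C[v,α]` is a loop chart, i.e.
(L1) an infinite path from `v` exists, (L2) every infinite path from `v`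
returns to `v` after a positive number of steps, (L3) √ is not a vertex of
`C[v,α]`), and (W2)(b) (layeredness) for an entry/body-labeling to be a
LLEE-witness. -/
structure IsLLEE (C : LChart V A) : Prop where
  w1 : ¬ ∃ f : ℕ → V, f 0 = C.start ∧ ∀ n : ℕ, C.BStep (f n) (f (n + 1))
  w2a_L1 : ∀ (v : V) (α : ℕ), C.HasEntry v α → ∃ f : ℕ → V, C.LoopSeq v α f
  w2a_L2 : ∀ (v : V) (α : ℕ), C.HasEntry v α →
    ∀ f : ℕ → V, C.LoopSeq v α f → ∃ n : ℕ, 0 < n ∧ f n = v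
  w2a_L3 : ∀ (v : V) (α : ℕ), ¬ C.Descends v α C.tick
  w2b : ∀ (v w : V) (α : ℕ), C.Descends v α w → ∀ β : ℕ, α ≤ β → ¬ C.HasEntry w β

/-- `u` and `v` lie in the same strongly connected component. -/
def SameSCC (C : LChart V A) (u v : V) : Prop :=
  Relation.ReflTransGen C.AnyStep u v ∧ Relation.ReflTransGen C.AnyStep v u

/-- `w` loops back to `v`: `v` descends in a loop to `w` and there is a nonempty
path of body transitions from `w` back to `v`. -/
def LoopsBack (C : LChart V A) (w v : V) : Prop :=
  C.Desc v w ∧ Relation.TransGen C.BStep w v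

/-- `w` directly loops back to `v`. -/
def DLoopsBack (C : LChart V A) (w v : V) : Prop :=
  C.LoopsBack w v ∧ ∀ u : V, C.LoopsBack w u → u = v ∨ C.LoopsBack v u

end LChart

namespace LChart

variable {V A : Type}

/-- Path from `a` to `c` with list of subsequent vertices `l`. -/
inductive PathL (R : V → V → Prop) : V → List V → V → Prop
  | nil {a : V} : PathL R a [] a
  | cons {a b c : V} {l : List V} : R a b → PathL R b l c → PathL R a (b :: l) c

theorem pathL_of_rtg {R : V → V → Prop} {a c : V} (h : Relation.ReflTransGen R a c) :
    ∃ l : List V, PathL R a l c := by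
  induction h using Relation.ReflTransGen.head_induction_on with
  | refl => exact ⟨[], PathL.nil⟩
  | head hab _ ih => obtain ⟨l, hl⟩ := ih; exact ⟨_ :: l, PathL.cons hab hl⟩

theorem pathL_split {R : V → V → Prop} {a c w : V} {l : List V}
    (h : PathL R a l c) (hw : w ∈ l) :
    ∃ l₂ : List V, PathL R w l₂ c ∧ l₂.length < l.length ∧ ∀ v ∈ l₂, v ∈ l := by
  induction h with
  | nil => simp at hw
  | cons hR hp ih =>
    rcases List.mem_cons.mp hw with h1 | h2
    · subst h1; exact ⟨_, hp, by simp, fun v hv => List.mem_cons_of_mem _ hv⟩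
    · obtain ⟨l₂, h1, h2', h3⟩ := ih h2
      exact ⟨l₂, h1, lt_trans h2' (by simp), fun v hv => List.mem_cons_of_mem _ (h3 v hv)⟩

theorem anyStep_cases {C : LChart V A} {x y : V} (hs : C.AnyStep x y) :
    C.BStep x y ∨ ∃ m, C.EStep m x y := by
  obtain ⟨a, n, hs⟩ := hs
  rcases Nat.eq_zero_or_pos n with h0 | h0
  · exact Or.inl ⟨a, h0 ▸ hs⟩
  · exact Or.inr ⟨n, h0, a, hs⟩

theorem Descends.tail {C : LChart V A} {z w b : V} {δ : ℕ}
    (hds : C.Descends z δ w) (hb : C.BStep w b) (hbz : b ≠ z) : C.Descends z δ b := by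
  obtain ⟨u, h1, h2, h3⟩ := hds
  exact ⟨u, h1, h2, h3.tail ⟨hb, hbz⟩⟩

theorem Descends.ne' {C : LChart V A} {x y : V} {α : ℕ} (hds : C.Descends x α y) : y ≠ x := by
  obtain ⟨u, _, h2, h3⟩ := hds
  induction h3 with
  | refl => exact h2
  | tail _ hstep _ => exact hstep.2

theorem Descends.hasEntry {C : LChart V A} {x y : V} {α : ℕ} (hds : C.Descends x α y) :
    C.HasEntry x α := by
  obtain ⟨u, ⟨hpos, a, htr⟩, _, _⟩ := hds
  exact ⟨hpos, a, u, htr⟩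

theorem Desc.reach {C : LChart V A} {x y : V} (hd : C.Desc x y) :
    Relation.ReflTransGen C.AnyStep x y := by
  obtain ⟨α, u, ⟨_, a, htr⟩, _, hrtg⟩ := hd
  refine Relation.ReflTransGen.head ⟨a, α, htr⟩ ?_
  exact Relation.ReflTransGen.mono
    (fun p q hpq => by obtain ⟨⟨a', ht⟩, _⟩ := hpq; exact ⟨a', 0, ht⟩) _ _ hrtg

theorem rtg_desc_reach {C : LChart V A} {x y : V} (hd : Relation.ReflTransGen C.Desc x y) :
    Relation.ReflTransGen C.AnyStep x y := by
  induction hd with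
  | refl => exact .refl
  | tail _ hbc ih => exact ih.trans hbc.reach

/-- Key auxiliary: if `z` descends at level `δ` to `w`, and there is a path from `w`
to `x` avoiding `z`, and `x` has an entry at level `α ≥ δ`, contradiction. -/
theorem lemB {C : LChart V A} (h : C.IsLLEE) :
    ∀ n : ℕ, ∀ (l : List V) (w x z : V) (δ α : ℕ),
      l.length = n → PathL C.AnyStep w l x → w ≠ z → z ∉ l →
      C.Descends z δ w → C.HasEntry x α → δ ≤ α → False := by
  intro n
  induction n using Nat.strong_induction_on with
  | _ n ih =>
    intro l w x z δ α hlen hp hwz hzl hdesc hent hδα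
    cases hp with
    | nil => exact h.w2b z w δ hdesc α hδα hent
    | cons hR hp' =>
      rename_i b l'
      by_cases hwx : w = x
      · subst hwx; exact h.w2b z w δ hdesc α hδα hent
      rcases anyStep_cases hR with hbody | ⟨m, mpos, a, htr⟩
      · have hbz : b ≠ z := fun hbz => hzl (hbz ▸ List.mem_cons_self)
        exact ih l'.length (by simp [← hlen]) l' b x z δ α rfl hp' hbz
          (fun hm => hzl (List.mem_cons_of_mem _ hm)) (hdesc.tail hbody hbz) hent hδα
      · have hentw : C.HasEntry w m := ⟨mpos, a, b, htr⟩
        have hmδ : m < δ := lt_of_not_ge fun hle => h.w2b z w δ hdesc m hle hentw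
        by_cases hwin : w ∈ b :: l'
        · obtain ⟨l₂, hp₂, hlt, hsub⟩ := pathL_split (PathL.cons hR hp') hwin
          exact ih l₂.length (hlen ▸ hlt) l₂ w x z δ α rfl hp₂ hwz
            (fun hm => hzl (hsub z hm)) hdesc hent hδα
        · have hbw : b ≠ w := fun hbw => hwin (hbw ▸ List.mem_cons_self)
          have hdw : C.Descends w m b := ⟨b, ⟨mpos, a, htr⟩, hbw, Relation.ReflTransGen.refl⟩
          exact ih l'.length (by simp [← hlen]) l' b x w m α rfl hp' hbw
            (fun hm => hwin (List.mem_cons_of_mem _ hm)) hdw hent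
            (le_of_lt (lt_of_lt_of_le hmδ hδα))

/-- If `x` descends to `y` and there is a path from `y` back to `x`, then there is
a nonempty body path from `y` back to `x`. -/
theorem lemA {C : LChart V A} (h : C.IsLLEE) :
    ∀ n : ℕ, ∀ (l : List V) (y x : V) (α : ℕ),
      l.length = n → PathL C.AnyStep y l x → C.Descends x α y →
      Relation.TransGen C.BStep y x := by
  intro n
  induction n using Nat.strong_induction_on with
  | _ n ih =>
    intro l y x α hlen hp hdesc
    cases hp with
    | nil => exact absurd rfl hdesc.ne'
    | cons hR hp' =>
      rename_i b l'
      rcases anyStep_cases hR with hbody | ⟨m, mpos, a, htr⟩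
      · by_cases hbx : b = x
        · exact Relation.TransGen.single (hbx ▸ hbody)
        · exact Relation.TransGen.head hbody
            (ih l'.length (by simp [← hlen]) l' b x α rfl hp' (hdesc.tail hbody hbx))
      · have hmα : m < α := lt_of_not_ge fun hle => h.w2b x y α hdesc m hle ⟨mpos, a, b, htr⟩
        by_cases hyin : y ∈ b :: l'
        · obtain ⟨l₂, hp₂, hlt, _⟩ := pathL_split (PathL.cons hR hp') hyin
          exact ih l₂.length (hlen ▸ hlt) l₂ y x α rfl hp₂ hdesc
        · have hby : b ≠ y := fun he => hyin (he ▸ List.mem_cons_self)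
          exact absurd hdesc.hasEntry fun hent =>
            lemB h l'.length l' b x y m α rfl hp' hby
              (fun hm => hyin (List.mem_cons_of_mem _ hm))
              ⟨b, ⟨mpos, a, htr⟩, hby, Relation.ReflTransGen.refl⟩ hent (le_of_lt hmα)

theorem loopsBack_of_desc {C : LChart V A} (h : C.IsLLEE) {x y : V}
    (hd : C.Desc x y) (hr : Relation.ReflTransGen C.AnyStep y x) : C.LoopsBack y x := by
  obtain ⟨α, hdes⟩ := hd
  obtain ⟨l, hp⟩ := pathL_of_rtg hr
  exact ⟨⟨α, hdes⟩, lemA h l.length l y x α rfl hp hdes⟩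

end LChart

/-- If `u` and `v` lie in the same strongly connected component and `u ↓* v`, then
`v ⇢* u` (`v` loops back to `u` in finitely many steps). -/
theorem sameSCC_descends_loopsBack {V A : Type} [Finite V] (C : LChart V A)
    (h : C.IsLLEE) (u v : V) (hscc : C.SameSCC u v)
    (hd : Relation.ReflTransGen C.Desc u v) :
    Relation.ReflTransGen C.LoopsBack v u := by
  revert hscc
  induction hd with
  | refl => intro _; exact Relation.ReflTransGen.refl
  | tail huw hwv ih =>
    rename_i b c
    intro hscc
    have hcu : Relation.ReflTransGen C.AnyStep c u := hscc.2
    have hub : Relation.ReflTransGen C.AnyStep u b := LChart.rtg_desc_reach huw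
    have hbu : Relation.ReflTransGen C.AnyStep b u := hwv.reach.trans hcu
    have hcb : C.LoopsBack c b := LChart.loopsBack_of_desc h hwv (hcu.trans hub)
    exact Relation.ReflTransGen.head hcb (ih ⟨hub, hbu⟩)
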